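/- For any matrix space S ≤ M(n, F) in which every matrix is nilpotent, there exists j ∈ [n] such that the standard column basis vector e_j is S-adapted, i.e., no matrix X ∈ S has column span equal to the line spanned by e_j. -/

import Mathlib

open Matrix
open scoped Fin.CommRing

/-- The column span of a matrix: the span of its columns in `F^n`. -/
def colSpan (F : Type*) [Field F] {n : ℕ} (X : Matrix (Fin n) (Fin n) F) :
    Submodule F (Fin n → F) :=
  Submodule.span F (Set.range Xᵀ)

/-- A cycle for `g` of length `≥ 2` exists. -/
lemma cycle_exists {n : ℕ} (hn : 0 < n) (g : Fin n → Fin n) (hgne : ∀ j, g j ≠ j) :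
    ∃ m, ∃ f : Fin (m + 2) → Fin n, Function.Injective f ∧ ∀ i, f (i + 1) = g (f i) := by
  classical
  obtain ⟨a, b, hab, heq⟩ :=
    Finite.exists_ne_map_eq_of_infinite (fun t : ℕ => g^[t] (⟨0, hn⟩ : Fin n))
  wlog hlt : a < b generalizing a b
  · exact this b a hab.symm heq.symm (by omega)
  have hper : ∃ p, 0 < p ∧ g^[p] (g^[a] (⟨0, hn⟩ : Fin n)) = g^[a] (⟨0, hn⟩ : Fin n) := by
    refine ⟨b - a, by omega, ?_⟩
    rw [← Function.iterate_add_apply, show b - a + a = b by omega]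
    exact heq.symm
  obtain ⟨j, hper'⟩ : ∃ j : Fin n, ∃ p, 0 < p ∧ g^[p] j = j := ⟨_, hper⟩
  obtain ⟨p, ⟨hp0, hpj⟩, hpmin⟩ :
      ∃ p, (0 < p ∧ g^[p] j = j) ∧ ∀ r < p, ¬(0 < r ∧ g^[r] j = j) :=
    ⟨Nat.find hper', Nat.find_spec hper', fun r hr => Nat.find_min hper' hr⟩
  have hp2 : 2 ≤ p := by
    by_contra h
    have hp1 : p = 1 := by omega
    rw [hp1, Function.iterate_one] at hpj
    exact hgne j hpj
  refine ⟨p - 2, fun i => g^[i.val] j, ?_, ?_⟩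
  · intro i i' hii
    have hkey : ∀ u v : ℕ, u < v → v < p → g^[u] j ≠ g^[v] j := by
      intro u v huv hvp hguv
      have hjj : g^[p - v + u] j = j := by
        rw [Function.iterate_add_apply, hguv, ← Function.iterate_add_apply,
          show p - v + v = p by omega]
        exact hpj
      exact hpmin (p - v + u) (by omega) ⟨by omega, hjj⟩
    have h1 : i.val < p - 2 + 2 := i.isLt
    have h2 : i'.val < p - 2 + 2 := i'.isLt
    rcases Nat.lt_trichotomy i.val i'.val with h | h | h
    · exact absurd hii (hkey _ _ h (by omega))
    · exact Fin.ext h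
    · exact absurd hii.symm (hkey _ _ h (by omega))
  · intro i
    show g^[(i + 1 : Fin (p - 2 + 2)).val] j = g (g^[i.val] j)
    have hv : (i + 1 : Fin (p - 2 + 2)).val = (i.val + 1) % (p - 2 + 2) := by
      simp [Fin.add_def]
    rcases Nat.lt_or_ge (i.val + 1) (p - 2 + 2) with h | h
    · rw [hv, Nat.mod_eq_of_lt h, Function.iterate_succ_apply']
    · have hi : i.val = p - 2 + 1 := by have := i.isLt; omega
      have hv0 : (i + 1 : Fin (p - 2 + 2)).val = 0 := by
        rw [hv, show i.val + 1 = p - 2 + 2 by omega, Nat.mod_self]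
      rw [hv0]
      show j = g (g^[i.val] j)
      conv_lhs => rw [← hpj, show p = i.val + 1 by omega, Function.iterate_succ_apply']

/-- If a cycle has a chord, there is a strictly shorter cycle. -/
lemma chord_shorten {n : ℕ} {F : Type*} [Zero F] (c : Fin n → Fin n → F)
    (hdiag : ∀ j, c j j = 0) {m : ℕ} (f : Fin (m + 2) → Fin n)
    (hinj : Function.Injective f) (hedge : ∀ i, c (f i) (f (i + 1)) ≠ 0)
    {i k : Fin (m + 2)} (hc : c (f i) (f k) ≠ 0) (hne : k ≠ i + 1) :
    ∃ m' < m, ∃ f' : Fin (m' + 2) → Fin n, Function.Injective f' ∧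
      ∀ t, c (f' t) (f' (t + 1)) ≠ 0 := by
  have hki : k ≠ i := by rintro rfl; exact hc (hdiag (f k))
  have hd1 : 1 ≤ (i - k).val := by
    by_contra h
    have h0 : i - k = 0 := by
      apply Fin.ext
      simp only [Fin.val_zero]
      omega
    exact hki (sub_eq_zero.mp h0).symm
  have hdM : (i - k).val < m + 2 := (i - k).isLt
  have hd2 : (i - k).val < m + 1 := by
    rcases Nat.lt_or_ge (i - k).val (m + 1) with h | h
    · exact h
    · exfalso
      apply hne
      have hik : i - k = -1 := by
        apply Fin.ext
        have h1 : ((-1 : Fin (m + 2))).val = m + 1 := by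
          rw [Fin.neg_def]
          simp [Fin.val_one]
        omega
      have : k = i - (-1) := by rw [← hik]; ring
      rw [this]; ring
  refine ⟨(i - k).val - 1, by omega, ?_⟩
  have hlt' : ∀ t : Fin ((i - k).val - 1 + 2), t.val < m + 2 := by
    intro t; have := t.isLt; omega
  refine ⟨fun t => f (k + ⟨t.val, hlt' t⟩), ?_, ?_⟩
  · intro t t' htt
    have h2 : (⟨t.val, hlt' t⟩ : Fin (m + 2)) = ⟨t'.val, hlt' t'⟩ :=
      add_left_cancel (hinj htt)
    exact Fin.ext (by simpa using congrArg Fin.val h2)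
  · intro t
    have hvt : (t + 1 : Fin ((i - k).val - 1 + 2)).val
        = (t.val + 1) % ((i - k).val - 1 + 2) := by simp [Fin.add_def]
    rcases Nat.lt_or_ge (t.val + 1) ((i - k).val - 1 + 2) with h | h
    · have hv : (t + 1 : Fin ((i - k).val - 1 + 2)).val = t.val + 1 := by
        rw [hvt, Nat.mod_eq_of_lt h]
      have hstep : (⟨(t + 1 : Fin ((i - k).val - 1 + 2)).val, hlt' _⟩ : Fin (m + 2))
          = ⟨t.val, hlt' t⟩ + 1 := by
        apply Fin.ext
        show (t + 1 : Fin _).val = ((⟨t.val, hlt' t⟩ : Fin (m + 2)) + 1).val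
        rw [hv, Fin.add_def]
        show t.val + 1 = (t.val + (1 : Fin (m + 2)).val) % (m + 2)
        rw [Fin.val_one, Nat.mod_eq_of_lt (by omega)]
      show c (f _) (f (k + _)) ≠ 0
      rw [hstep, ← add_assoc]
      exact hedge _
    · have ht : t.val = (i - k).val - 1 + 1 := by have := t.isLt; omega
      have hv0 : (t + 1 : Fin ((i - k).val - 1 + 2)).val = 0 := by
        rw [hvt, show t.val + 1 = (i - k).val - 1 + 2 by omega, Nat.mod_self]
      have hz : (⟨(t + 1 : Fin ((i - k).val - 1 + 2)).val, hlt' _⟩ : Fin (m + 2)) = 0 := by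
        apply Fin.ext
        simp [hv0]
      have hmk : (⟨t.val, hlt' t⟩ : Fin (m + 2)) = i - k := by
        apply Fin.ext
        show t.val = (i - k).val
        omega
      show c (f (k + _)) (f (k + _)) ≠ 0
      rw [hz, add_zero, hmk, show k + (i - k) = i by ring]
      exact hc

/-- There is a chordless cycle for `c`. -/
lemma key_comb {n : ℕ} {F : Type*} [Zero F] (hn : 0 < n) (c : Fin n → Fin n → F)
    (hdiag : ∀ j, c j j = 0) (hex : ∀ j, ∃ k, c j k ≠ 0) :
    ∃ m, ∃ f : Fin (m + 2) → Fin n, Function.Injective f ∧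
      (∀ i, c (f i) (f (i + 1)) ≠ 0) ∧ (∀ i k, c (f i) (f k) ≠ 0 → k = i + 1) := by
  classical
  choose g hg using hex
  have hgne : ∀ j, g j ≠ j := fun j h => hg j (by rw [h]; exact hdiag j)
  have hPex : ∃ m, ∃ f : Fin (m + 2) → Fin n, Function.Injective f ∧
      ∀ i, c (f i) (f (i + 1)) ≠ 0 := by
    obtain ⟨m, f, hinj, hstep⟩ := cycle_exists hn g hgne
    exact ⟨m, f, hinj, fun i => by rw [hstep i]; exact hg _⟩
  obtain ⟨m, ⟨f, hinj, hedge⟩, hmin⟩ :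
      ∃ m, (∃ f : Fin (m + 2) → Fin n, Function.Injective f ∧
        ∀ i, c (f i) (f (i + 1)) ≠ 0) ∧
        ∀ r < m, ¬∃ f : Fin (r + 2) → Fin n, Function.Injective f ∧
          ∀ i, c (f i) (f (i + 1)) ≠ 0 :=
    ⟨Nat.find hPex, Nat.find_spec hPex, fun r hr => Nat.find_min hPex hr⟩
  refine ⟨m, f, hinj, hedge, ?_⟩
  intro i k hc
  by_contra hne
  obtain ⟨m', hm', f', hinj', hedge'⟩ := chord_shorten c hdiag f hinj hedge hc hne
  exact hmin m' hm' ⟨f', hinj', hedge'⟩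


/-- de Seguins Pazzis's lemma: for any nil matrix space `S ≤ M(n, F)` there is `j`
such that the standard basis vector `e_j` is `S`-adapted, i.e. no `X ∈ S` has column
span equal to the line spanned by `e_j`. -/
theorem stmt_7 (F : Type*) [Field F] (n : ℕ) (hn : 0 < n)
    (S : Submodule F (Matrix (Fin n) (Fin n) F))
    (hnil : ∀ B ∈ S, IsNilpotent B) :
    ∃ j : Fin n, ∀ X ∈ S,
      colSpan F X ≠ Submodule.span F {Pi.single j (1 : F)} := by
  by_contra hcon
  push_neg at hcon
  choose X hXS hXeq using hcon
  -- entries off row j vanish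
  have hcol : ∀ j k l, k ≠ j → X j k l = 0 := by
    intro j k l hk
    have hmem : (X j)ᵀ l ∈ colSpan F (X j) := Submodule.subset_span ⟨l, rfl⟩
    rw [hXeq j] at hmem
    obtain ⟨t, ht⟩ := Submodule.mem_span_singleton.mp hmem
    have h2 := congrFun ht k
    simp only [Pi.smul_apply, Pi.single_apply, Matrix.transpose_apply,
      smul_eq_mul, if_neg hk, mul_zero] at h2
    exact h2.symm
  have hXne : ∀ j, X j ≠ 0 := by
    intro j h0
    have hej : Pi.single j (1 : F) ∈ colSpan F (X j) := by
      rw [hXeq j]; exact Submodule.mem_span_singleton_self _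
    rw [h0] at hej
    have hle : colSpan F (0 : Matrix (Fin n) (Fin n) F) ≤ ⊥ := by
      apply Submodule.span_le.mpr
      rintro x ⟨l, rfl⟩
      exact Submodule.zero_mem ⊥
    have h1 := congrFun (Submodule.mem_bot F |>.mp (hle hej)) j
    simp [Pi.single_apply] at h1
  -- X j squared
  have hsq : ∀ j, X j * X j = X j j j • X j := by
    intro j
    ext k l
    rw [Matrix.mul_apply,
      Finset.sum_eq_single j (fun p _ hp => by rw [hcol j p l hp, mul_zero])
        (fun hj => absurd (Finset.mem_univ j) hj)]
    simp only [Matrix.smul_apply, smul_eq_mul]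
    rcases eq_or_ne k j with rfl | hk
    · rfl
    · rw [hcol j k j hk, hcol j k l hk, zero_mul, mul_zero]
  have hdiag : ∀ j, X j j j = 0 := by
    intro j
    obtain ⟨N, hN⟩ := hnil (X j) (hXS j)
    have hpow : ∀ t : ℕ, X j ^ (t + 2) = (X j j j) ^ (t + 1) • X j := by
      intro t
      induction t with
      | zero => rw [pow_one]; rw [pow_two]; exact hsq j
      | succ t ih =>
        rw [show t + 1 + 2 = (t + 2) + 1 by omega, pow_succ, ih, smul_mul_assoc,
          hsq j, smul_smul, ← pow_succ]
    have hz : X j ^ (N + 2) = 0 := by rw [pow_add, hN, zero_mul]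
    rw [hpow N] at hz
    rcases smul_eq_zero.mp hz with h | h
    · exact pow_eq_zero_iff (by omega) |>.mp h
    · exact absurd h (hXne j)
  have hex : ∀ j, ∃ k, X j j k ≠ 0 := by
    intro j
    by_contra h
    push_neg at h
    apply hXne j
    ext k l
    simp only [Matrix.zero_apply]
    rcases eq_or_ne k j with rfl | hk
    · exact h l
    · exact hcol j k l hk
  -- get a chordless cycle
  obtain ⟨m, f, hinj, hedge, hchord⟩ := key_comb hn (fun j => X j j) hdiag hex
  simp only [ne_eq] at hedge hchord
  set B : Matrix (Fin n) (Fin n) F := ∑ i : Fin (m + 2), X (f i) with hB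
  have hBS : B ∈ S := Submodule.sum_mem S (fun i _ => hXS (f i))
  obtain ⟨N, hN⟩ := hnil B hBS
  -- action of B on basis vectors of the cycle
  have happly : ∀ (A : Matrix (Fin n) (Fin n) F) (v : Fin n) (k : Fin n),
      (A *ᵥ Pi.single v (1 : F)) k = A k v := by
    intro A v k
    simp [Matrix.mulVec, dotProduct, Pi.single_apply]
  have hkey : ∀ r : Fin (m + 2), B *ᵥ Pi.single (f r) (1 : F)
      = (X (f (r - 1)) (f (r - 1)) (f r)) • (Pi.single (f (r - 1)) (1 : F) : Fin n → F) := by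
    intro r
    funext k
    rw [happly]
    have hBapp : B k (f r) = ∑ i : Fin (m + 2), X (f i) k (f r) := by
      rw [hB]
      simp [Matrix.sum_apply]
    rw [hBapp, Finset.sum_eq_single (r - 1)]
    · simp only [Pi.smul_apply, Pi.single_apply, smul_eq_mul]
      rcases eq_or_ne k (f (r - 1)) with rfl | hk
      · simp
      · rw [hcol _ k _ hk, if_neg hk, mul_zero]
    · intro i _ hir
      rcases eq_or_ne k (f i) with rfl | hk
      · by_contra hcne
        have : r = i + 1 := hchord i r hcne
        exact hir (eq_sub_iff_add_eq.mpr this.symm)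
      · exact hcol _ k _ hk
    · intro habs
      exact absurd (Finset.mem_univ _) habs
  -- iterate
  have hiter : ∀ t : ℕ, ∃ lam : F, lam ≠ 0 ∧
      (B ^ t) *ᵥ Pi.single (f 0) (1 : F)
        = lam • (Pi.single (f (-(t : Fin (m + 2)))) (1 : F) : Fin n → F) := by
    intro t
    induction t with
    | zero =>
      refine ⟨1, one_ne_zero, ?_⟩
      rw [pow_zero, Matrix.one_mulVec, one_smul]
      norm_num
    | succ t ih =>
      obtain ⟨lam, hlam, hlt⟩ := ih
      refine ⟨lam * X (f (-(t : Fin (m + 2)) - 1)) (f (-(t : Fin (m + 2)) - 1))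
        (f (-(t : Fin (m + 2)))), mul_ne_zero hlam ?_, ?_⟩
      · have := hedge (-(t : Fin (m + 2)) - 1)
        rwa [sub_add_cancel] at this
      · have hc : (-(((t + 1) : ℕ) : Fin (m + 2))) = -(t : Fin (m + 2)) - 1 := by
          push_cast
          ring
        rw [pow_succ', ← Matrix.mulVec_mulVec, hlt, Matrix.mulVec_smul, hkey (-(t : Fin (m + 2))),
          hc, smul_smul]
  obtain ⟨lam, hlam, hBt⟩ := hiter N
  rw [hN, Matrix.zero_mulVec] at hBt
  have h1 := congrFun hBt (f (-(N : Fin (m + 2))))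
  simp only [Pi.zero_apply, Pi.smul_apply, Pi.single_eq_same, smul_eq_mul, mul_one] at h1
  exact hlam h1.symm
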